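/- Let n be a positive integer and ℓ a prime. Then the number of bipartitions of n equals the sum, over partitions ν of n all of whose parts are powers of ℓ, of the number of tuples of ℓ-regular bipartitions of the multiplicity type m(ν), where for ν with distinct part sizes ℓ^{a_1},...,ℓ^{a_r} occurring with multiplicities m_1,...,m_r, the count is the product over i of the number of pairs (λ,μ) of ℓ-regular partitions with |λ|+|μ| = m_i. -/

import Mathlib

namespace Stmt10Aux


/-- base-ℓ digit -/
def dig (ℓ a k : ℕ) : ℕ := k / ℓ ^ a % ℓ

theorem dig_zero (ℓ a : ℕ) : dig ℓ a 0 = 0 := by simp [dig]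

theorem dig_ne_zero_le {ℓ a k : ℕ} (h : dig ℓ a k ≠ 0) : ℓ ^ a ≤ k := by
  by_contra hc
  exact h (by simp [dig, Nat.div_eq_of_lt (Nat.lt_of_not_le hc)])

/-- L1: digit expansion sums back -/
theorem sum_dig (ℓ : ℕ) (hℓ : 2 ≤ ℓ) :
    ∀ (N k : ℕ), k < ℓ ^ N → ∑ a ∈ Finset.range N, dig ℓ a k * ℓ ^ a = k := by
  intro N
  induction N with
  | zero =>
    intro k hk
    simp only [pow_zero, Nat.lt_one_iff] at hk
    simp [hk]
  | succ N ih =>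
    intro k hk
    have hℓ0 : 0 < ℓ := by omega
    rw [Finset.sum_range_succ']
    have h1 : ∀ a, dig ℓ (a + 1) k * ℓ ^ (a + 1) = (dig ℓ a (k / ℓ) * ℓ ^ a) * ℓ := by
      intro a
      simp only [dig, pow_succ]
      rw [mul_comm (ℓ ^ a) ℓ, ← Nat.div_div_eq_div_mul]
      ring
    simp only [h1, ← Finset.sum_mul]
    have hk' : k / ℓ < ℓ ^ N := by
      rw [Nat.div_lt_iff_lt_mul hℓ0]
      calc k < ℓ ^ (N + 1) := hk
        _ = ℓ ^ N * ℓ := by ring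
    rw [ih _ hk']
    simp only [dig, pow_zero, Nat.div_one, mul_one]
    rw [mul_comm]
    exact Nat.div_add_mod k ℓ

/-- L2: digits of a digit-sum -/
theorem dig_sum (ℓ : ℕ) (hℓ : 2 ≤ ℓ) :
    ∀ (N : ℕ) (c : ℕ → ℕ), (∀ i, c i < ℓ) → ∀ b,
      dig ℓ b (∑ i ∈ Finset.range N, c i * ℓ ^ i) = if b < N then c b else 0 := by
  intro N
  induction N with
  | zero => intro c hc b; simp [dig]
  | succ N ih =>
    intro c hc b
    have hℓ0 : 0 < ℓ := by omega
    have hsplit : ∑ i ∈ Finset.range (N + 1), c i * ℓ ^ i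
        = c 0 + ℓ * ∑ i ∈ Finset.range N, c (i + 1) * ℓ ^ i := by
      rw [Finset.sum_range_succ', Finset.mul_sum]
      simp only [pow_succ, pow_zero, mul_one]
      rw [add_comm]
      congr 1
      apply Finset.sum_congr rfl
      intro i _
      ring
    rw [hsplit]
    cases b with
    | zero =>
      simp only [dig, pow_zero, Nat.div_one]
      rw [Nat.add_mul_mod_self_left]
      simp [Nat.mod_eq_of_lt (hc 0)]
    | succ b =>
      have hdiv : (c 0 + ℓ * ∑ i ∈ Finset.range N, c (i + 1) * ℓ ^ i) / ℓ
          = ∑ i ∈ Finset.range N, c (i + 1) * ℓ ^ i := by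
        rw [Nat.add_mul_div_left _ _ hℓ0, Nat.div_eq_of_lt (hc 0), zero_add]
      have : dig ℓ (b + 1) (c 0 + ℓ * ∑ i ∈ Finset.range N, c (i + 1) * ℓ ^ i)
          = dig ℓ b ((c 0 + ℓ * ∑ i ∈ Finset.range N, c (i + 1) * ℓ ^ i) / ℓ) := by
        simp only [dig, pow_succ]
        rw [Nat.div_div_eq_div_mul, mul_comm (ℓ ^ b) ℓ, ← Nat.div_div_eq_div_mul]
      rw [this, hdiv, ih _ (fun i => hc (i + 1))]
      simp only [Nat.add_lt_add_iff_right]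



/-- weight of a colored multiplicity function -/
def wt (f : ℕ × Bool →₀ ℕ) : ℕ := f.sum fun x m => x.1 * m

/-- weight of a plain multiplicity function -/
def wt1 (g : ℕ →₀ ℕ) : ℕ := g.sum fun k m => k * m

def injb (b : Bool) : ℕ ↪ ℕ × Bool :=
  ⟨fun k => (k, b), fun _ _ h => (Prod.mk.injEq _ _ _ _ ▸ h).1⟩

/-- slice of a colored function at color b -/
noncomputable def slice (b : Bool) (f : ℕ × Bool →₀ ℕ) : ℕ →₀ ℕ :=
  f.comapDomain (fun k => (k, b)) (fun _ _ _ _ h => (Prod.mk.injEq _ _ _ _ ▸ h).1)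

@[simp] theorem slice_apply (b : Bool) (f : ℕ × Bool →₀ ℕ) (k : ℕ) :
    slice b f k = f (k, b) := Finsupp.comapDomain_apply _ _ _ _

/-- embed a plain function with color b -/
noncomputable def emb (b : Bool) (g : ℕ →₀ ℕ) : ℕ × Bool →₀ ℕ := g.embDomain (injb b)

theorem emb_apply (b : Bool) (g : ℕ →₀ ℕ) (x : ℕ × Bool) :
    emb b g x = if x.2 = b then g x.1 else 0 := by
  obtain ⟨k, b'⟩ := x
  by_cases h : b' = b
  · subst h
    simp only [if_pos rfl]
    exact Finsupp.embDomain_apply_self (injb b') g k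
  · simp only [h, if_false]
    apply Finsupp.embDomain_notin_range
    rintro ⟨k', hk'⟩
    exact h (congrArg Prod.snd hk').symm

/-- combine two plain functions into a colored one -/
noncomputable def comb (g₁ g₂ : ℕ →₀ ℕ) : ℕ × Bool →₀ ℕ := emb true g₁ + emb false g₂

theorem comb_apply (g₁ g₂ : ℕ →₀ ℕ) (x : ℕ × Bool) :
    comb g₁ g₂ x = if x.2 = true then g₁ x.1 else g₂ x.1 := by
  obtain ⟨k, b⟩ := x
  cases b <;> simp [comb, emb_apply]

@[simp] theorem slice_comb_true (g₁ g₂ : ℕ →₀ ℕ) : slice true (comb g₁ g₂) = g₁ := by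
  ext k; simp [comb_apply]

@[simp] theorem slice_comb_false (g₁ g₂ : ℕ →₀ ℕ) : slice false (comb g₁ g₂) = g₂ := by
  ext k; simp [comb_apply]

@[simp] theorem comb_slice (f : ℕ × Bool →₀ ℕ) : comb (slice true f) (slice false f) = f := by
  ext ⟨k, b⟩; cases b <;> simp [comb_apply]

theorem wt_emb (b : Bool) (g : ℕ →₀ ℕ) : wt (emb b g) = wt1 g := by
  unfold wt wt1 emb
  rw [Finsupp.sum_embDomain]
  rfl

theorem wt_comb (g₁ g₂ : ℕ →₀ ℕ) : wt (comb g₁ g₂) = wt1 g₁ + wt1 g₂ := by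
  unfold comb
  rw [wt, Finsupp.sum_add_index' (fun _ => by simp) (fun a b₁ b₂ => by ring)]
  exact congrArg₂ (· + ·) (wt_emb true g₁) (wt_emb false g₂)

/-- a single term is at most the weight -/
theorem le_wt1 (g : ℕ →₀ ℕ) (k : ℕ) : k * g k ≤ wt1 g := by
  by_cases h : g k = 0
  · simp [h]
  · exact Finset.single_le_sum (f := fun i => i * g i) (fun _ _ => Nat.zero_le _)
      (Finsupp.mem_support_iff.mpr h)

theorem le_wt (f : ℕ × Bool →₀ ℕ) (x : ℕ × Bool) : x.1 * f x ≤ wt f := by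
  by_cases h : f x = 0
  · simp [h]
  · exact Finset.single_le_sum (f := fun i => i.1 * f i) (fun _ _ => Nat.zero_le _)
      (Finsupp.mem_support_iff.mpr h)

theorem wt1_eq_sum_subset (g : ℕ →₀ ℕ) (s : Finset ℕ) (h : g.support ⊆ s) :
    wt1 g = ∑ k ∈ s, k * g k :=
  Finsupp.sum_of_support_subset g h _ (fun _ _ => by simp)

theorem wt_eq_sum_subset (f : ℕ × Bool →₀ ℕ) (s : Finset (ℕ × Bool)) (h : f.support ⊆ s) :
    wt f = ∑ x ∈ s, x.1 * f x :=
  Finsupp.sum_of_support_subset f h _ (fun _ _ => by simp)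

/-- positivity condition -/
def Pos1 (g : ℕ →₀ ℕ) : Prop := ∀ k ∈ g.support, 0 < k

def PosC (f : ℕ × Bool →₀ ℕ) : Prop := ∀ x ∈ f.support, 0 < x.1

theorem pos1_iff (g : ℕ →₀ ℕ) : Pos1 g ↔ ∀ k, g k ≠ 0 → 0 < k := by
  simp [Pos1, Finsupp.mem_support_iff]

theorem posC_iff (f : ℕ × Bool →₀ ℕ) : PosC f ↔ ∀ x : ℕ × Bool, f x ≠ 0 → 0 < x.1 := by
  simp [PosC, Finsupp.mem_support_iff]

theorem posC_comb_iff (g₁ g₂ : ℕ →₀ ℕ) : PosC (comb g₁ g₂) ↔ Pos1 g₁ ∧ Pos1 g₂ := by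
  simp only [posC_iff, pos1_iff]
  constructor
  · intro h
    exact ⟨fun k hk => h (k, true) (by simpa [comb_apply] using hk),
           fun k hk => h (k, false) (by simpa [comb_apply] using hk)⟩
  · rintro ⟨h₁, h₂⟩ ⟨k, b⟩ hk
    cases b
    · exact h₂ k (by simpa [comb_apply] using hk)
    · exact h₁ k (by simpa [comb_apply] using hk)

theorem pos1_slice (f : ℕ × Bool →₀ ℕ) (hf : PosC f) (b : Bool) : Pos1 (slice b f) := by
  rw [pos1_iff]
  intro k hk
  exact (posC_iff f).mp hf (k, b) (by simpa using hk)

/-- g k = 0 for k > wt1 g when g is positive, and g 0 = 0 -/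
theorem val_le_wt1 (g : ℕ →₀ ℕ) (hg : Pos1 g) (k : ℕ) : g k ≤ wt1 g := by
  by_cases h : g k = 0
  · simp [h]
  · have hk : 0 < k := (pos1_iff g).mp hg k h
    calc g k ≤ k * g k := Nat.le_mul_of_pos_left _ hk
      _ ≤ wt1 g := le_wt1 g k

theorem eq_zero_of_gt_wt1 (g : ℕ →₀ ℕ) (k : ℕ) (h : wt1 g < k) : g k = 0 := by
  by_contra hc
  have : k ≤ k * g k := Nat.le_mul_of_pos_right _ (Nat.pos_of_ne_zero hc)
  exact absurd (le_trans this (le_wt1 g k)) (by omega)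

/-- Finiteness of {g // Pos1 g ∧ wt1 g = a}-style types -/
theorem finite_subtype_wt1 (P : (ℕ →₀ ℕ) → Prop) (a : ℕ)
    (hP : ∀ g, P g → Pos1 g) :
    Finite {g : ℕ →₀ ℕ // P g ∧ wt1 g = a} := by
  apply Finite.of_injective (β := Fin (a + 1) → Fin (a + 1))
    (fun g => fun k => ⟨g.1 k, by
      have h1 : g.1 k ≤ wt1 g.1 := val_le_wt1 g.1 (hP g.1 g.2.1) k
      omega⟩)
  intro g₁ g₂ h
  apply Subtype.ext
  ext k
  by_cases hk : k ≤ a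
  · have := congrFun h ⟨k, by omega⟩
    simpa using congrArg Fin.val this
  · rw [eq_zero_of_gt_wt1 g₁.1 k (by omega), eq_zero_of_gt_wt1 g₂.1 k (by omega)]

theorem valC_le_wt (f : ℕ × Bool →₀ ℕ) (hf : PosC f) (x : ℕ × Bool) : f x ≤ wt f := by
  by_cases h : f x = 0
  · simp [h]
  · have hx : 0 < x.1 := (posC_iff f).mp hf x h
    calc f x ≤ x.1 * f x := Nat.le_mul_of_pos_left _ hx
      _ ≤ wt f := le_wt f x

theorem eqC_zero_of_gt_wt (f : ℕ × Bool →₀ ℕ) (hf : PosC f) (x : ℕ × Bool)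
    (h : wt f < x.1) : f x = 0 := by
  by_contra hc
  have : x.1 ≤ x.1 * f x := Nat.le_mul_of_pos_right _ (Nat.pos_of_ne_zero hc)
  exact absurd (le_trans this (le_wt f x)) (by omega)

theorem finite_subtype_wt (P : (ℕ × Bool →₀ ℕ) → Prop) (n : ℕ)
    (hP : ∀ f, P f → PosC f) :
    Finite {f : ℕ × Bool →₀ ℕ // P f ∧ wt f = n} := by
  apply Finite.of_injective (β := Fin (n + 1) × Bool → Fin (n + 1))
    (fun f => fun p => ⟨f.1 (p.1, p.2), by
      have h1 : f.1 (p.1, p.2) ≤ wt f.1 := valC_le_wt f.1 (hP f.1 f.2.1) _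
      omega⟩)
  intro f₁ f₂ h
  apply Subtype.ext
  ext ⟨k, b⟩
  by_cases hk : k ≤ n
  · have := congrFun h (⟨k, by omega⟩, b)
    simpa using congrArg Fin.val this
  · rw [eqC_zero_of_gt_wt f₁.1 (hP f₁.1 f₁.2.1) (k, b) (by simp; omega),
        eqC_zero_of_gt_wt f₂.1 (hP f₂.1 f₂.2.1) (k, b) (by simp; omega)]




theorem sum_toMultiset (f : ℕ →₀ ℕ) : (Finsupp.toMultiset f).sum = wt1 f := by
  rw [Finsupp.toMultiset_apply, Finsupp.sum, ← Multiset.coe_sumAddMonoidHom,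
    map_sum Multiset.sumAddMonoidHom _ f.support]
  simp only [Multiset.coe_sumAddMonoidHom]
  rw [wt1, Finsupp.sum]
  apply Finset.sum_congr rfl
  intro k _
  simp [Multiset.sum_nsmul, mul_comm]



noncomputable def partEquiv (a : ℕ) : Nat.Partition a ≃ {g : ℕ →₀ ℕ // Pos1 g ∧ wt1 g = a} where
  toFun p := ⟨Multiset.toFinsupp p.parts,
    fun k hk => p.parts_pos (by simpa [Multiset.toFinsupp_support] using hk),
    by rw [← sum_toMultiset, Multiset.toFinsupp_toMultiset]; exact p.parts_sum⟩
  invFun g := ⟨Finsupp.toMultiset g.1,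
    fun {i} hi => g.2.1 i (by rwa [← Finsupp.mem_toMultiset]),
    by rw [sum_toMultiset]; exact g.2.2⟩
  left_inv p := by
    ext1
    simp [Multiset.toFinsupp_toMultiset]
  right_inv g := by
    apply Subtype.ext
    simp [Finsupp.toMultiset_toFinsupp]

theorem partEquiv_count (a : ℕ) (p : Nat.Partition a) (i : ℕ) :
    (partEquiv a p).1 i = p.parts.count i := rfl

noncomputable def regPartEquiv (ℓ a : ℕ) :
    {p : Nat.Partition a // ∀ i : ℕ, p.parts.count i < ℓ} ≃
      {g : ℕ →₀ ℕ // (Pos1 g ∧ ∀ k, g k < ℓ) ∧ wt1 g = a} where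
  toFun p := ⟨(partEquiv a p.1).1, ⟨(partEquiv a p.1).2.1,
      fun k => by rw [partEquiv_count]; exact p.2 k⟩, (partEquiv a p.1).2.2⟩
  invFun g := ⟨(partEquiv a).symm ⟨g.1, g.2.1.1, g.2.2⟩, by
      intro i
      have : (partEquiv a ((partEquiv a).symm ⟨g.1, g.2.1.1, g.2.2⟩)).1 i
          = ((⟨g.1, g.2.1.1, g.2.2⟩ : {g : ℕ →₀ ℕ // Pos1 g ∧ wt1 g = a})).1 i := by
        rw [Equiv.apply_symm_apply]
      rw [← partEquiv_count, this]
      exact g.2.1.2 i⟩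
  left_inv p := by
    apply Subtype.ext
    show (partEquiv a).symm _ = _
    have : (⟨(partEquiv a p.1).1, (partEquiv a p.1).2.1, (partEquiv a p.1).2.2⟩ :
        {g : ℕ →₀ ℕ // Pos1 g ∧ wt1 g = a}) = partEquiv a p.1 := rfl
    rw [this, Equiv.symm_apply_apply]
  right_inv g := by
    apply Subtype.ext
    have := congrArg Subtype.val
      (Equiv.apply_symm_apply (partEquiv a) ⟨g.1, g.2.1.1, g.2.2⟩)
    exact this


end Stmt10Aux

namespace Stmt10Aux

theorem nat_card_sigma {ι : Type*} [Fintype ι] (β : ι → Type*) [∀ i, Finite (β i)] :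
    Nat.card (Σ i, β i) = ∑ i, Nat.card (β i) := by
  letI : ∀ i, Fintype (β i) := fun i => Fintype.ofFinite (β i)
  rw [Nat.card_eq_fintype_card, Fintype.card_sigma]
  exact Finset.sum_congr rfl fun i _ => (Nat.card_eq_fintype_card).symm

theorem wt_eq_slices (f : ℕ × Bool →₀ ℕ) :
    wt f = wt1 (slice true f) + wt1 (slice false f) := by
  conv_lhs => rw [← comb_slice f]
  exact wt_comb _ _

theorem card_split (P : (ℕ →₀ ℕ) → Prop) (hP : ∀ g, P g → Pos1 g) (n : ℕ) :
    Nat.card {f : ℕ × Bool →₀ ℕ //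
        (P (slice true f) ∧ P (slice false f)) ∧ wt f = n} =
      ∑ a ∈ Finset.range (n + 1),
        Nat.card {g : ℕ →₀ ℕ // P g ∧ wt1 g = a} *
          Nat.card {g : ℕ →₀ ℕ // P g ∧ wt1 g = n - a} := by
  classical
  set T := {f : ℕ × Bool →₀ ℕ // (P (slice true f) ∧ P (slice false f)) ∧ wt f = n} with hT
  have hposC : ∀ f : ℕ × Bool →₀ ℕ,
      (P (slice true f) ∧ P (slice false f)) → PosC f := by
    intro f hf
    rw [posC_iff]
    rintro ⟨k, b⟩ hkb
    cases b
    · exact (pos1_iff _).mp (hP _ hf.2) k (by simpa using hkb)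
    · exact (pos1_iff _).mp (hP _ hf.1) k (by simpa using hkb)
  haveI hTfin : Finite T := finite_subtype_wt _ n hposC
  haveI : ∀ a, Finite {g : ℕ →₀ ℕ // P g ∧ wt1 g = a} :=
    fun a => finite_subtype_wt1 P a hP
  have hbound : ∀ f : T, wt1 (slice true f.1) ≤ n := by
    intro f
    have := wt_eq_slices f.1
    have h2 := f.2.2
    omega
  set v : T → Fin (n + 1) := fun f => ⟨wt1 (slice true f.1), Nat.lt_succ_of_le (hbound f)⟩
    with hv
  have e1 : T ≃ Σ a : Fin (n + 1), {f : T // v f = a} := (Equiv.sigmaFiberEquiv v).symm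
  have efib : ∀ a : Fin (n + 1), {f : T // v f = a} ≃
      ({g : ℕ →₀ ℕ // P g ∧ wt1 g = (a : ℕ)} ×
       {g : ℕ →₀ ℕ // P g ∧ wt1 g = n - (a : ℕ)}) := by
    intro a
    refine ⟨fun f => (⟨slice true f.1.1, f.1.2.1.1, ?_⟩, ⟨slice false f.1.1, f.1.2.1.2, ?_⟩),
      fun g => ⟨⟨comb g.1.1 g.2.1, ⟨by simp [g.1.2.1], by simp [g.2.2.1]⟩, ?_⟩, ?_⟩, ?_, ?_⟩
    · exact congrArg Fin.val f.2
    · have h1 := wt_eq_slices f.1.1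
      have h2 := f.1.2.2
      have h3 : wt1 (slice true f.1.1) = (a : ℕ) := congrArg Fin.val f.2
      omega
    · rw [wt_comb, g.1.2.2, g.2.2.2]
      have := a.2
      omega
    · apply Fin.ext
      show wt1 (slice true (comb g.1.1 g.2.1)) = (a : ℕ)
      rw [slice_comb_true, g.1.2.2]
    · intro f
      apply Subtype.ext
      apply Subtype.ext
      show comb (slice true f.1.1) (slice false f.1.1) = f.1.1
      exact comb_slice f.1.1
    · intro g
      refine Prod.ext ?_ ?_ <;> apply Subtype.ext
      · show slice true (comb g.1.1 g.2.1) = g.1.1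
        exact slice_comb_true _ _
      · show slice false (comb g.1.1 g.2.1) = g.2.1
        exact slice_comb_false _ _
  have : Nat.card T = ∑ a : Fin (n + 1),
      Nat.card {g : ℕ →₀ ℕ // P g ∧ wt1 g = (a : ℕ)} *
        Nat.card {g : ℕ →₀ ℕ // P g ∧ wt1 g = n - (a : ℕ)} := by
    rw [Nat.card_congr e1, nat_card_sigma]
    exact Finset.sum_congr rfl fun a _ => by
      rw [Nat.card_congr (efib a), Nat.card_prod]
  rw [this, Fin.sum_univ_eq_sum_range (fun a => Nat.card {g : ℕ →₀ ℕ // P g ∧ wt1 g = a} *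
    Nat.card {g : ℕ →₀ ℕ // P g ∧ wt1 g = n - a}) (n + 1)]

end Stmt10Aux

namespace Stmt10Aux

/-! ## The type `T` of digit data -/

/-- weight of a digit-data function -/
def wtT (ℓ : ℕ) (g : ℕ × (ℕ × Bool) →₀ ℕ) : ℕ := g.sum fun p m => ℓ ^ p.1 * p.2.1 * m

def PosT (g : ℕ × (ℕ × Bool) →₀ ℕ) : Prop := ∀ p : ℕ × (ℕ × Bool), g p ≠ 0 → 0 < p.2.1

theorem le_wtT (ℓ : ℕ) (g : ℕ × (ℕ × Bool) →₀ ℕ) (p : ℕ × (ℕ × Bool)) :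
    ℓ ^ p.1 * p.2.1 * g p ≤ wtT ℓ g := by
  by_cases h : g p = 0
  · simp [h]
  · exact Finset.single_le_sum (f := fun q => ℓ ^ q.1 * q.2.1 * g q)
      (fun _ _ => Nat.zero_le _) (Finsupp.mem_support_iff.mpr h)

theorem wtT_eq_sum_subset (ℓ : ℕ) (g : ℕ × (ℕ × Bool) →₀ ℕ)
    (s : Finset (ℕ × (ℕ × Bool))) (h : g.support ⊆ s) :
    wtT ℓ g = ∑ p ∈ s, ℓ ^ p.1 * p.2.1 * g p :=
  Finsupp.sum_of_support_subset g h _ (fun _ _ => by simp)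

section Main

variable {ℓ : ℕ} (hℓ : 2 ≤ ℓ)

include hℓ in
theorem lt_pow_self' (a : ℕ) : a < ℓ ^ a :=
  lt_of_lt_of_le (Nat.lt_two_pow_self (n := a)) (Nat.pow_le_pow_left hℓ a)

include hℓ in
/-- bounds on support of an element of `T` -/
theorem T_bounds {n : ℕ} (g : ℕ × (ℕ × Bool) →₀ ℕ) (hpos : PosT g)
    (hwt : wtT ℓ g = n) (p : ℕ × (ℕ × Bool)) (hp : g p ≠ 0) :
    p.1 ≤ n ∧ p.2.1 ≤ n ∧ g p ≤ n := by
  have h1 : 0 < p.2.1 := hpos p hp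
  have h2 : ℓ ^ p.1 * p.2.1 * g p ≤ n := hwt ▸ le_wtT ℓ g p
  have h3 : 0 < g p := Nat.pos_of_ne_zero hp
  have h4 : 0 < ℓ ^ p.1 := Nat.pow_pos (by omega)
  have h5 : ℓ ^ p.1 ≤ n := by
    calc ℓ ^ p.1 = ℓ ^ p.1 * 1 * 1 := by ring
      _ ≤ ℓ ^ p.1 * p.2.1 * g p := by
          apply Nat.mul_le_mul (Nat.mul_le_mul_left _ h1) h3
      _ ≤ n := h2
  refine ⟨le_trans (le_of_lt (lt_pow_self' hℓ p.1)) h5, ?_, ?_⟩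
  · calc p.2.1 = 1 * p.2.1 * 1 := by ring
      _ ≤ ℓ ^ p.1 * p.2.1 * g p := Nat.mul_le_mul (Nat.mul_le_mul_right _ h4) h3
      _ ≤ n := h2
  · calc g p = 1 * 1 * g p := by ring
      _ ≤ ℓ ^ p.1 * p.2.1 * g p :=
          Nat.mul_le_mul (Nat.mul_le_mul h4 h1) le_rfl
      _ ≤ n := h2

include hℓ in
theorem finite_T (n : ℕ) :
    Finite {g : ℕ × (ℕ × Bool) →₀ ℕ // (PosT g ∧ ∀ p, g p < ℓ) ∧ wtT ℓ g = n} := by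
  apply Finite.of_injective (β := Fin (n + 1) × Fin (n + 1) × Bool → Fin (n + 1))
    (fun g => fun q => ⟨g.1 (q.1, (q.2.1, q.2.2)), by
      by_cases h : g.1 (q.1, (q.2.1, q.2.2)) = 0
      · omega
      · have := (T_bounds hℓ g.1 g.2.1.1 g.2.2 _ h).2.2
        omega⟩)
  intro g₁ g₂ h
  apply Subtype.ext
  ext ⟨a, k, b⟩
  by_cases hk : a ≤ n ∧ k ≤ n
  · have := congrFun h (⟨a, by omega⟩, ⟨k, by omega⟩, b)
    simpa using congrArg Fin.val this
  · have z1 : g₁.1 (a, (k, b)) = 0 := by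
      by_contra hc
      have := T_bounds hℓ g₁.1 g₁.2.1.1 g₁.2.2 _ hc
      simp at this; omega
    have z2 : g₂.1 (a, (k, b)) = 0 := by
      by_contra hc
      have := T_bounds hℓ g₂.1 g₂.2.1.1 g₂.2.2 _ hc
      simp at this; omega
    rw [z1, z2]

/-! ## The main digit bijection -/

theorem posC_iff_slices (f : ℕ × Bool →₀ ℕ) :
    (Pos1 (slice true f) ∧ Pos1 (slice false f)) ↔ PosC f := by
  constructor
  · intro h
    rw [posC_iff]
    rintro ⟨k, b⟩ hk
    cases b
    · exact (pos1_iff _).mp h.2 k (by simpa using hk)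
    · exact (pos1_iff _).mp h.1 k (by simpa using hk)
  · intro h
    exact ⟨pos1_slice f h true, pos1_slice f h false⟩

include hℓ in
theorem main_equiv (n : ℕ) :
    Nonempty ({f : ℕ × Bool →₀ ℕ // PosC f ∧ wt f = n} ≃
      {g : ℕ × (ℕ × Bool) →₀ ℕ // (PosT g ∧ ∀ p, g p < ℓ) ∧ wtT ℓ g = n}) := by
  classical
  have hℓ0 : 0 < ℓ := by omega
  have hpow : ∀ k : ℕ, k ≤ n → k < ℓ ^ (n + 1) := fun k hk =>
    lt_of_le_of_lt hk (lt_of_le_of_lt (Nat.le_succ n) (lt_pow_self' hℓ (n + 1)))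
  -- forward map
  refine ⟨⟨fun f => ⟨Finsupp.onFinset ((Finset.range (n + 1)) ×ˢ f.1.support)
      (fun p => dig ℓ p.1 (f.1 p.2)) ?_, ⟨?_, ?_⟩, ?_⟩,
    fun g => ⟨Finsupp.onFinset (g.1.support.image Prod.snd)
      (fun x => ∑ a ∈ Finset.range (n + 1), g.1 (a, x) * ℓ ^ a) ?_, ?_, ?_⟩, ?_, ?_⟩⟩
  · -- support bound for forward
    rintro ⟨a, x⟩ hne
    have hfx : f.1 x ≠ 0 := fun h0 => hne (by simp [h0, dig_zero])
    have h1 : ℓ ^ a ≤ f.1 x := dig_ne_zero_le hne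
    have h2 : f.1 x ≤ wt f.1 := valC_le_wt f.1 f.2.1 x
    have h3 : a < ℓ ^ a := lt_pow_self' hℓ a
    simp only [Finset.mem_product, Finset.mem_range]
    exact ⟨by have := f.2.2; omega, Finsupp.mem_support_iff.mpr hfx⟩
  · -- PosT
    rintro ⟨a, x⟩ hne
    simp only [Finsupp.onFinset_apply] at hne
    have hfx : f.1 x ≠ 0 := fun h0 => hne (by simp [h0, dig_zero])
    exact (posC_iff f.1).mp f.2.1 x hfx
  · -- digits < ℓ
    intro p
    simp only [Finsupp.onFinset_apply, dig]
    exact Nat.mod_lt _ hℓ0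
  · -- weight
    rw [wtT_eq_sum_subset ℓ _ ((Finset.range (n + 1)) ×ˢ f.1.support)
      Finsupp.support_onFinset_subset]
    simp only [Finsupp.onFinset_apply]
    rw [Finset.sum_product, Finset.sum_comm]
    have : ∀ x ∈ f.1.support,
        ∑ a ∈ Finset.range (n + 1), ℓ ^ a * x.1 * dig ℓ a (f.1 x) = x.1 * f.1 x := by
      intro x _
      have hfx : f.1 x < ℓ ^ (n + 1) :=
        hpow _ (le_trans (valC_le_wt f.1 f.2.1 x) (le_of_eq f.2.2))
      calc ∑ a ∈ Finset.range (n + 1), ℓ ^ a * x.1 * dig ℓ a (f.1 x)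
          = x.1 * ∑ a ∈ Finset.range (n + 1), dig ℓ a (f.1 x) * ℓ ^ a := by
            rw [Finset.mul_sum]; exact Finset.sum_congr rfl fun a _ => by ring
        _ = x.1 * f.1 x := by rw [sum_dig ℓ hℓ _ _ hfx]
    rw [Finset.sum_congr rfl this, ← wt_eq_sum_subset f.1 f.1.support le_rfl]
    exact f.2.2
  · -- support bound for backward
    intro x hne
    obtain ⟨a, -, ha⟩ := Finset.exists_ne_zero_of_sum_ne_zero hne
    have : g.1 (a, x) ≠ 0 := fun h0 => ha (by simp [h0])
    exact Finset.mem_image.mpr ⟨(a, x), Finsupp.mem_support_iff.mpr this, rfl⟩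
  · -- PosC
    rw [posC_iff]
    intro x hne
    simp only [Finsupp.onFinset_apply] at hne
    obtain ⟨a, -, ha⟩ := Finset.exists_ne_zero_of_sum_ne_zero hne
    have : g.1 (a, x) ≠ 0 := fun h0 => ha (by simp [h0])
    exact g.2.1.1 (a, x) this
  · -- weight backward
    have hsub : g.1.support ⊆ (Finset.range (n + 1)) ×ˢ (g.1.support.image Prod.snd) := by
      rintro ⟨a, x⟩ hp
      have hne : g.1 (a, x) ≠ 0 := Finsupp.mem_support_iff.mp hp
      have := (T_bounds hℓ g.1 g.2.1.1 g.2.2 _ hne).1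
      simp only [Finset.mem_product, Finset.mem_range]
      exact ⟨by omega, Finset.mem_image.mpr ⟨(a, x), hp, rfl⟩⟩
    rw [wt_eq_sum_subset _ (g.1.support.image Prod.snd) Finsupp.support_onFinset_subset]
    simp only [Finsupp.onFinset_apply]
    have key : wtT ℓ g.1 = ∑ x ∈ g.1.support.image Prod.snd,
        x.1 * ∑ a ∈ Finset.range (n + 1), g.1 (a, x) * ℓ ^ a := by
      rw [wtT_eq_sum_subset ℓ g.1 _ hsub, Finset.sum_product, Finset.sum_comm]
      apply Finset.sum_congr rfl
      intro x _
      rw [Finset.mul_sum]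
      exact Finset.sum_congr rfl fun a _ => by ring
    rw [← key]
    exact g.2.2
  · -- left inverse
    intro f
    apply Subtype.ext
    ext x
    simp only [Finsupp.onFinset_apply]
    have hfx : f.1 x < ℓ ^ (n + 1) := hpow _ (le_trans (valC_le_wt f.1 f.2.1 x) (le_of_eq f.2.2))
    exact sum_dig ℓ hℓ _ _ hfx
  · -- right inverse
    intro g
    apply Subtype.ext
    ext ⟨a, x⟩
    simp only [Finsupp.onFinset_apply]
    rw [dig_sum ℓ hℓ (n + 1) (fun b => g.1 (b, x)) (fun b => g.2.1.2 _) a]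
    by_cases ha : a < n + 1
    · rw [if_pos ha]
    · rw [if_neg ha]
      by_contra hc
      have := (T_bounds hℓ g.1 g.2.1.1 g.2.2 (a, x) (fun h0 => hc h0.symm)).1
      omega

end Main

end Stmt10Aux

namespace Stmt10Aux

/-! ## Slices by exponent, μ, ν -/

noncomputable def sliceT (a : ℕ) (g : ℕ × (ℕ × Bool) →₀ ℕ) : ℕ × Bool →₀ ℕ :=
  g.comapDomain (fun x => (a, x)) (fun _ _ _ _ h => (Prod.mk.injEq _ _ _ _ ▸ h).2)

@[simp] theorem sliceT_apply (a : ℕ) (g : ℕ × (ℕ × Bool) →₀ ℕ) (x : ℕ × Bool) :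
    sliceT a g x = g (a, x) := Finsupp.comapDomain_apply _ _ _ _

theorem sliceT_eq_zero (a : ℕ) (g : ℕ × (ℕ × Bool) →₀ ℕ)
    (h : ∀ x, g (a, x) = 0) : sliceT a g = 0 := by
  ext x; simp [h]

noncomputable def muOf (g : ℕ × (ℕ × Bool) →₀ ℕ) : ℕ →₀ ℕ :=
  Finsupp.onFinset (g.support.image Prod.fst) (fun a => wt (sliceT a g)) (by
    intro a ha
    by_contra hc
    apply ha
    have hz : ∀ x, g (a, x) = 0 := by
      intro x
      by_contra hx
      exact hc (Finset.mem_image.mpr ⟨(a, x), Finsupp.mem_support_iff.mpr hx, rfl⟩)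
    show wt (sliceT a g) = 0
    rw [sliceT_eq_zero a g hz]
    simp [wt, Finsupp.sum_zero_index])

@[simp] theorem muOf_apply (g : ℕ × (ℕ × Bool) →₀ ℕ) (a : ℕ) :
    muOf g a = wt (sliceT a g) := Finsupp.onFinset_apply

noncomputable def embT (a : ℕ) (f : ℕ × Bool →₀ ℕ) : ℕ × (ℕ × Bool) →₀ ℕ :=
  f.embDomain ⟨fun x => (a, x), fun _ _ h => (Prod.mk.injEq _ _ _ _ ▸ h).2⟩

theorem embT_apply (a : ℕ) (f : ℕ × Bool →₀ ℕ) (p : ℕ × (ℕ × Bool)) :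
    embT a f p = if p.1 = a then f p.2 else 0 := by
  obtain ⟨a', x⟩ := p
  by_cases h : a' = a
  · subst h
    simp only [if_pos rfl]
    exact Finsupp.embDomain_apply_self ⟨fun x => (a', x), fun _ _ h => (Prod.mk.injEq _ _ _ _ ▸ h).2⟩ f x
  · simp only [h, if_false]
    apply Finsupp.embDomain_notin_range
    rintro ⟨x', hx'⟩
    exact h (congrArg Prod.fst hx').symm

theorem wtT_embT (ℓ a : ℕ) (f : ℕ × Bool →₀ ℕ) :
    wtT ℓ (embT a f) = ℓ ^ a * wt f := by
  unfold wtT embT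
  rw [Finsupp.sum_embDomain]
  simp only [Function.Embedding.coeFn_mk, wt, Finsupp.sum, Finset.mul_sum]
  exact Finset.sum_congr rfl fun x _ => by show ℓ ^ a * x.1 * f x = _; ring

theorem wtT_eq_sum_slices (ℓ : ℕ) (g : ℕ × (ℕ × Bool) →₀ ℕ) (E : Finset ℕ)
    (hE : g.support.image Prod.fst ⊆ E) :
    wtT ℓ g = ∑ a ∈ E, ℓ ^ a * wt (sliceT a g) := by
  classical
  set X := g.support.image Prod.snd with hX
  have hsub : g.support ⊆ E ×ˢ X := by
    rintro ⟨a, x⟩ hp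
    exact Finset.mem_product.mpr ⟨hE (Finset.mem_image.mpr ⟨(a, x), hp, rfl⟩),
      Finset.mem_image.mpr ⟨(a, x), hp, rfl⟩⟩
  rw [wtT_eq_sum_subset ℓ g _ hsub, Finset.sum_product]
  apply Finset.sum_congr rfl
  intro a _
  have hslice : (sliceT a g).support ⊆ X := by
    intro x hx
    have : g (a, x) ≠ 0 := by
      have := Finsupp.mem_support_iff.mp hx
      simpa using this
    exact Finset.mem_image.mpr ⟨(a, x), Finsupp.mem_support_iff.mpr this, rfl⟩
  rw [wt_eq_sum_subset _ X hslice, Finset.mul_sum]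
  exact Finset.sum_congr rfl fun x _ => by simp; ring

section Nu

variable {ℓ : ℕ} (hℓ : 2 ≤ ℓ)

/-- the type T -/
def TnT (ℓ n : ℕ) : Type :=
  {g : ℕ × (ℕ × Bool) →₀ ℕ // (PosT g ∧ ∀ p, g p < ℓ) ∧ wtT ℓ g = n}

/-- regular colored bipartition type -/
def RBT (ℓ m : ℕ) : Type :=
  {f : ℕ × Bool →₀ ℕ // (PosC f ∧ ∀ x, f x < ℓ) ∧ wt f = m}

omit hℓ in
theorem muOf_support_eq {n : ℕ} (g : TnT ℓ n) (a : ℕ) :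
    muOf g.1 a ≠ 0 ↔ ∃ x, g.1 (a, x) ≠ 0 := by
  rw [muOf_apply]
  constructor
  · intro h
    by_contra hc
    push_neg at hc
    rw [sliceT_eq_zero a g.1 hc] at h
    exact h (by simp [wt, Finsupp.sum_zero_index])
  · rintro ⟨x, hx⟩
    intro h0
    have h1 : 0 < x.1 := g.2.1.1 (a, x) hx
    have h2 : x.1 * sliceT a g.1 x ≤ wt (sliceT a g.1) := le_wt _ _
    rw [h0] at h2
    simp only [sliceT_apply] at h2
    have : 0 < x.1 * g.1 (a, x) := Nat.mul_pos h1 (Nat.pos_of_ne_zero hx)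
    omega

include hℓ in
noncomputable def nuOf {n : ℕ} (g : TnT ℓ n) : Nat.Partition n where
  parts := (Finsupp.toMultiset (muOf g.1)).map (ℓ ^ ·)
  parts_pos := by
    intro i hi
    obtain ⟨a, -, rfl⟩ := Multiset.mem_map.mp hi
    exact Nat.pow_pos (by omega)
  parts_sum := by
    rw [Finsupp.toMultiset_map, sum_toMultiset]
    unfold wt1
    rw [Finsupp.sum_mapDomain_index (fun b => by simp) (fun b m₁ m₂ => by ring)]
    have h1 : (muOf g.1).sum (fun a m => ℓ ^ a * m)
        = ∑ a ∈ g.1.support.image Prod.fst, ℓ ^ a * muOf g.1 a :=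
      Finsupp.sum_of_support_subset _ Finsupp.support_onFinset_subset _ (fun _ _ => by simp)
    have h2 : wtT ℓ g.1 = ∑ a ∈ g.1.support.image Prod.fst, ℓ ^ a * muOf g.1 a := by
      rw [wtT_eq_sum_slices ℓ g.1 _ le_rfl]
      exact Finset.sum_congr rfl fun a _ => by rw [muOf_apply]
    rw [h1, ← h2]
    exact g.2.2

theorem nuOf_count {n : ℕ} (g : TnT ℓ n) (a : ℕ) :
    ((nuOf hℓ g).parts.count (ℓ ^ a)) = muOf g.1 a := by
  show (((Finsupp.toMultiset (muOf g.1)).map (ℓ ^ ·)).count (ℓ ^ a)) = _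
  rw [Multiset.count_map_eq_count' _ _ (Nat.pow_right_injective hℓ)]
  exact Finsupp.count_toMultiset _ _

theorem nuOf_powers {n : ℕ} (g : TnT ℓ n) :
    ∀ i ∈ (nuOf hℓ g).parts, ∃ a, i = ℓ ^ a := by
  intro i hi
  obtain ⟨a, -, rfl⟩ := Multiset.mem_map.mp hi
  exact ⟨a, rfl⟩

end Nu

end Stmt10Aux

namespace Stmt10Aux

theorem multiset_sum_eq_sum_count (s : Multiset ℕ) :
    s.sum = ∑ i ∈ s.toFinset, i * s.count i := by
  calc s.sum = (Finsupp.toMultiset (Multiset.toFinsupp s)).sum := by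
        rw [Multiset.toFinsupp_toMultiset]
    _ = wt1 (Multiset.toFinsupp s) := sum_toMultiset _
    _ = ∑ i ∈ (Multiset.toFinsupp s).support, i * (Multiset.toFinsupp s) i :=
        wt1_eq_sum_subset _ _ le_rfl
    _ = ∑ i ∈ s.toFinset, i * s.count i := by
        rw [Multiset.toFinsupp_support]
        exact Finset.sum_congr rfl fun i _ => by rw [Multiset.toFinsupp_apply]

section Fiber

variable {ℓ : ℕ} (hℓ : 2 ≤ ℓ) {n : ℕ}

include hℓ in
theorem sumEmb_apply (ν : Nat.Partition n) (hν : ∀ i ∈ ν.parts, ∃ a, i = ℓ ^ a)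
    (F : (i : ν.parts.toFinset) → (ℕ × Bool →₀ ℕ)) (a : ℕ) (x : ℕ × Bool) :
    (∑ i ∈ ν.parts.toFinset.attach, embT (Nat.log ℓ i.1) (F i)) (a, x)
      = if h : ℓ ^ a ∈ ν.parts.toFinset then F ⟨ℓ ^ a, h⟩ x else 0 := by
  classical
  rw [Finset.sum_apply']
  have hterm : ∀ i ∈ ν.parts.toFinset.attach,
      embT (Nat.log ℓ i.1) (F i) (a, x) = if i.1 = ℓ ^ a then F i x else 0 := by
    intro i _
    rw [embT_apply]
    obtain ⟨b, hb⟩ := hν i.1 (Multiset.mem_toFinset.mp i.2)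
    have hlog : Nat.log ℓ i.1 = b := by rw [hb, Nat.log_pow (by omega : 1 < ℓ)]
    show (if a = Nat.log ℓ i.1 then F i x else 0) = _
    rw [hlog]
    by_cases hab : a = b
    · subst hab
      rw [if_pos rfl, if_pos hb]
    · rw [if_neg hab, if_neg (fun hc : i.1 = ℓ ^ a =>
        hab (Nat.pow_right_injective hℓ (show ℓ ^ a = ℓ ^ b by rw [← hc, ← hb])))]
  rw [Finset.sum_congr rfl hterm]
  by_cases h : ℓ ^ a ∈ ν.parts.toFinset
  · rw [dif_pos h]
    have hcong : ∀ i ∈ ν.parts.toFinset.attach,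
        (if i.1 = ℓ ^ a then F i x else 0)
          = if i = ⟨ℓ ^ a, h⟩ then F i x else 0 := by
      intro i _
      exact if_congr ⟨fun hv => Subtype.ext hv, fun hv => by rw [hv]⟩ rfl rfl
    rw [Finset.sum_congr rfl hcong,
      Finset.sum_ite_eq' _ (⟨ℓ ^ a, h⟩ : ν.parts.toFinset) (fun i => F i x),
      if_pos (Finset.mem_attach _ _)]
  · rw [dif_neg h]
    apply Finset.sum_eq_zero
    intro i _
    rw [if_neg (fun hc : i.1 = ℓ ^ a => h (hc ▸ i.2))]

include hℓ in
theorem fiber_equiv (ν : Nat.Partition n) (hν : ∀ i ∈ ν.parts, ∃ a, i = ℓ ^ a) :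
    Nonempty ({g : TnT ℓ n // nuOf hℓ g = ν} ≃
      ((i : ν.parts.toFinset) → RBT ℓ (ν.parts.count i.1))) := by
  classical
  refine ⟨⟨fun g => fun i => ⟨sliceT (Nat.log ℓ i.1) g.1.1, ⟨?_, ?_⟩, ?_⟩,
    fun F => ⟨⟨∑ i ∈ ν.parts.toFinset.attach, embT (Nat.log ℓ i.1) (F i).1,
      ⟨?_, ?_⟩, ?_⟩, ?_⟩, ?_, ?_⟩⟩
  · -- PosC of slice
    rw [posC_iff]
    intro x hx
    simp only [sliceT_apply] at hx
    exact g.1.2.1.1 _ hx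
  · -- values < ℓ
    intro x
    rw [sliceT_apply]
    exact g.1.2.1.2 _
  · -- weight of slice = count
    obtain ⟨b, hb⟩ := hν i.1 (Multiset.mem_toFinset.mp i.2)
    have hlog : Nat.log ℓ i.1 = b := by rw [hb, Nat.log_pow (by omega : 1 < ℓ)]
    rw [hlog]
    have hcount : ν.parts.count i.1 = muOf g.1.1 b := by
      have hcg : Multiset.count (ℓ ^ b) (nuOf hℓ g.1).parts = Multiset.count (ℓ ^ b) ν.parts :=
        congrArg (fun π : Nat.Partition n => Multiset.count (ℓ ^ b) π.parts) g.2
      rw [hb, ← hcg, nuOf_count hℓ]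
    rw [hcount, muOf_apply]
  · -- PosT of G
    intro p hp
    obtain ⟨a, x⟩ := p
    rw [sumEmb_apply hℓ ν hν (fun i => (F i).1) a x] at hp
    by_cases h : ℓ ^ a ∈ ν.parts.toFinset
    · rw [dif_pos h] at hp
      exact (posC_iff _).mp (F ⟨ℓ ^ a, h⟩).2.1.1 x hp
    · rw [dif_neg h] at hp
      exact absurd rfl hp
  · -- values < ℓ
    intro p
    obtain ⟨a, x⟩ := p
    rw [sumEmb_apply hℓ ν hν (fun i => (F i).1) a x]
    by_cases h : ℓ ^ a ∈ ν.parts.toFinset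
    · rw [dif_pos h]; exact (F ⟨ℓ ^ a, h⟩).2.1.2 x
    · rw [dif_neg h]; omega
  · -- total weight = n
    rw [wtT, ← Finsupp.sum_finset_sum_index (fun p => by simp) (fun p m₁ m₂ => by ring)]
    have : ∀ i ∈ ν.parts.toFinset.attach,
        (embT (Nat.log ℓ i.1) (F i).1).sum (fun p m => ℓ ^ p.1 * p.2.1 * m)
          = i.1 * ν.parts.count i.1 := by
      intro i _
      obtain ⟨b, hb⟩ := hν i.1 (Multiset.mem_toFinset.mp i.2)
      have hlog : Nat.log ℓ i.1 = b := by rw [hb, Nat.log_pow (by omega : 1 < ℓ)]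
      show wtT ℓ (embT (Nat.log ℓ i.1) (F i).1) = _
      rw [wtT_embT, (F i).2.2, hlog, ← hb]
    rw [Finset.sum_congr rfl this,
      Finset.sum_attach ν.parts.toFinset (fun i => i * ν.parts.count i),
      ← multiset_sum_eq_sum_count]
    exact ν.parts_sum
  · -- nuOf G = ν
    apply Nat.Partition.ext
    apply Multiset.ext.mpr
    intro j
    by_cases hj : ∃ a, j = ℓ ^ a
    · obtain ⟨a, rfl⟩ := hj
      refine (nuOf_count hℓ _ a).trans ?_
      by_cases h : ℓ ^ a ∈ ν.parts.toFinset
      · have hs : sliceT a (∑ i ∈ ν.parts.toFinset.attach, embT (Nat.log ℓ i.1) (F i).1)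
            = (F ⟨ℓ ^ a, h⟩).1 := by
          ext x
          rw [sliceT_apply, sumEmb_apply hℓ ν hν (fun i => (F i).1) a x, dif_pos h]
        rw [muOf_apply, hs, (F ⟨ℓ ^ a, h⟩).2.2]
      · have hs : sliceT a (∑ i ∈ ν.parts.toFinset.attach, embT (Nat.log ℓ i.1) (F i).1)
            = 0 := by
          ext x
          rw [sliceT_apply, sumEmb_apply hℓ ν hν (fun i => (F i).1) a x, dif_neg h]
          rfl
        rw [muOf_apply, hs]
        have h2 : ℓ ^ a ∉ ν.parts := fun hc => h (Multiset.mem_toFinset.mpr hc)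
        rw [Multiset.count_eq_zero.mpr h2]
        simp [wt, Finsupp.sum_zero_index]
    · push_neg at hj
      rw [Multiset.count_eq_zero.mpr, Multiset.count_eq_zero.mpr]
      · intro hc
        obtain ⟨a, ha⟩ := hν j hc
        exact hj a ha
      · intro hc
        obtain ⟨a, -, ha⟩ := Multiset.mem_map.mp hc
        exact hj a ha.symm
  · -- left inverse
    intro g
    apply Subtype.ext
    apply Subtype.ext
    ext p
    obtain ⟨a, x⟩ := p
    rw [sumEmb_apply hℓ ν hν _ a x]
    by_cases h : ℓ ^ a ∈ ν.parts.toFinset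
    · rw [dif_pos h]
      show sliceT (Nat.log ℓ (ℓ ^ a)) g.1.1 x = g.1.1 (a, x)
      rw [Nat.log_pow (by omega : 1 < ℓ), sliceT_apply]
    · rw [dif_neg h]
      by_contra hc
      have hmu : muOf g.1.1 a ≠ 0 :=
        (muOf_support_eq g.1 a).mpr ⟨x, fun h0 => hc (by rw [h0])⟩
      have hcount : ν.parts.count (ℓ ^ a) ≠ 0 := by
        rw [← g.2, nuOf_count hℓ]
        exact hmu
      exact h (Multiset.mem_toFinset.mpr (Multiset.count_pos.mp
        (Nat.pos_of_ne_zero hcount)))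
  · -- right inverse
    intro F
    funext i
    apply Subtype.ext
    show sliceT (Nat.log ℓ i.1) _ = (F i).1
    ext x
    rw [sliceT_apply, sumEmb_apply hℓ ν hν (fun i => (F i).1) (Nat.log ℓ i.1) x]
    obtain ⟨b, hb⟩ := hν i.1 (Multiset.mem_toFinset.mp i.2)
    have hlog : Nat.log ℓ i.1 = b := by rw [hb, Nat.log_pow (by omega : 1 < ℓ)]
    have hpow : ℓ ^ Nat.log ℓ i.1 = i.1 := by rw [hlog, ← hb]
    have h : ℓ ^ Nat.log ℓ i.1 ∈ ν.parts.toFinset := by rw [hpow]; exact i.2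
    rw [dif_pos h]
    have hi : (⟨ℓ ^ Nat.log ℓ i.1, h⟩ : ν.parts.toFinset) = i := Subtype.ext hpow
    rw [hi]

end Fiber

end Stmt10Aux

namespace Stmt10Aux

theorem card_FB (n : ℕ) :
    (∑ a ∈ Finset.range (n + 1),
        Nat.card (Nat.Partition a) * Nat.card (Nat.Partition (n - a)))
      = Nat.card {f : ℕ × Bool →₀ ℕ // PosC f ∧ wt f = n} := by
  classical
  calc ∑ a ∈ Finset.range (n + 1),
        Nat.card (Nat.Partition a) * Nat.card (Nat.Partition (n - a))
      = ∑ a ∈ Finset.range (n + 1),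
        Nat.card {g : ℕ →₀ ℕ // Pos1 g ∧ wt1 g = a} *
          Nat.card {g : ℕ →₀ ℕ // Pos1 g ∧ wt1 g = n - a} := by
        exact Finset.sum_congr rfl fun a _ => by
          rw [Nat.card_congr (partEquiv a), Nat.card_congr (partEquiv (n - a))]
    _ = Nat.card {f : ℕ × Bool →₀ ℕ //
          (Pos1 (slice true f) ∧ Pos1 (slice false f)) ∧ wt f = n} :=
        (card_split Pos1 (fun _ h => h) n).symm
    _ = Nat.card {f : ℕ × Bool →₀ ℕ // PosC f ∧ wt f = n} :=
        Nat.card_congr (Equiv.subtypeEquivRight fun f =>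
          and_congr_left' (posC_iff_slices f))

theorem reg_slices_iff (ℓ : ℕ) (f : ℕ × Bool →₀ ℕ) :
    ((Pos1 (slice true f) ∧ ∀ k, slice true f k < ℓ) ∧
      (Pos1 (slice false f) ∧ ∀ k, slice false f k < ℓ)) ↔
      (PosC f ∧ ∀ x, f x < ℓ) := by
  constructor
  · rintro ⟨⟨h1, h2⟩, ⟨h3, h4⟩⟩
    refine ⟨(posC_iff_slices f).mp ⟨h1, h3⟩, ?_⟩
    rintro ⟨k, b⟩
    cases b
    · simpa using h4 k
    · simpa using h2 k
  · rintro ⟨h1, h2⟩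
    exact ⟨⟨pos1_slice f h1 true, fun k => by simpa using h2 (k, true)⟩,
      ⟨pos1_slice f h1 false, fun k => by simpa using h2 (k, false)⟩⟩

theorem card_RB (ℓ m : ℕ) :
    (∑ a ∈ Finset.range (m + 1),
        Nat.card {p : Nat.Partition a // ∀ i : ℕ, p.parts.count i < ℓ} *
          Nat.card {p : Nat.Partition (m - a) // ∀ i : ℕ, p.parts.count i < ℓ})
      = Nat.card (RBT ℓ m) := by
  classical
  calc ∑ a ∈ Finset.range (m + 1),
        Nat.card {p : Nat.Partition a // ∀ i : ℕ, p.parts.count i < ℓ} *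
          Nat.card {p : Nat.Partition (m - a) // ∀ i : ℕ, p.parts.count i < ℓ}
      = ∑ a ∈ Finset.range (m + 1),
        Nat.card {g : ℕ →₀ ℕ // (Pos1 g ∧ ∀ k, g k < ℓ) ∧ wt1 g = a} *
          Nat.card {g : ℕ →₀ ℕ // (Pos1 g ∧ ∀ k, g k < ℓ) ∧ wt1 g = m - a} := by
        exact Finset.sum_congr rfl fun a _ => by
          rw [Nat.card_congr (regPartEquiv ℓ a), Nat.card_congr (regPartEquiv ℓ (m - a))]
    _ = Nat.card {f : ℕ × Bool →₀ ℕ //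
          ((Pos1 (slice true f) ∧ ∀ k, slice true f k < ℓ) ∧
            (Pos1 (slice false f) ∧ ∀ k, slice false f k < ℓ)) ∧ wt f = m} :=
        (card_split (fun g => Pos1 g ∧ ∀ k, g k < ℓ) (fun _ h => h.1) m).symm
    _ = Nat.card (RBT ℓ m) :=
        Nat.card_congr (Equiv.subtypeEquivRight fun f =>
          and_congr_left' (reg_slices_iff ℓ f))

open scoped Classical in
theorem card_T_eq {ℓ : ℕ} (hℓ : 2 ≤ ℓ) (n : ℕ) :
    Nat.card (TnT ℓ n)
      = ∑ ν ∈ Finset.univ.filter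
          (fun ν : Nat.Partition n => ∀ i ∈ ν.parts, ∃ a : ℕ, i = ℓ ^ a),
        ∏ i ∈ ν.parts.toFinset, Nat.card (RBT ℓ (ν.parts.count i)) := by
  classical
  set s := Finset.univ.filter
    (fun ν : Nat.Partition n => ∀ i ∈ ν.parts, ∃ a : ℕ, i = ℓ ^ a) with hs
  haveI : Finite (TnT ℓ n) := finite_T hℓ n
  haveI : ∀ m, Finite (RBT ℓ m) := fun m =>
    finite_subtype_wt (fun f => PosC f ∧ ∀ x, f x < ℓ) m (fun _ h => h.1)
  set V : TnT ℓ n → {ν : Nat.Partition n // ν ∈ s} := fun g =>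
    ⟨nuOf hℓ g, by
      rw [hs, Finset.mem_filter]
      exact ⟨Finset.mem_univ _, nuOf_powers hℓ g⟩⟩ with hV
  have e1 : TnT ℓ n ≃ Σ ν : {ν : Nat.Partition n // ν ∈ s}, {g : TnT ℓ n // V g = ν} :=
    (Equiv.sigmaFiberEquiv V).symm
  rw [Nat.card_congr e1, nat_card_sigma]
  rw [← Finset.sum_coe_sort s
    (fun ν => ∏ i ∈ ν.parts.toFinset, Nat.card (RBT ℓ (ν.parts.count i)))]
  apply Finset.sum_congr rfl
  intro ν _
  have e2 : {g : TnT ℓ n // V g = ν} ≃ {g : TnT ℓ n // nuOf hℓ g = ν.1} :=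
    Equiv.subtypeEquivRight fun g => by
      rw [hV]
      exact ⟨fun h => congrArg Subtype.val h, fun h => Subtype.ext h⟩
  have hν : ∀ i ∈ (ν.1).parts, ∃ a : ℕ, i = ℓ ^ a :=
    (Finset.mem_filter.mp ν.2).2
  obtain ⟨e3⟩ := fiber_equiv hℓ ν.1 hν
  rw [Nat.card_congr (e2.trans e3), Nat.card_pi,
    ← Finset.prod_coe_sort (ν.1).parts.toFinset
      (fun i => Nat.card (RBT ℓ ((ν.1).parts.count i)))]

end Stmt10Aux


/-- The number of bipartitions of `n`: pairs of partitions `(λ, μ)` with `|λ| + |μ| = n`. -/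
noncomputable def numBipart (n : ℕ) : ℕ :=
  ∑ a ∈ Finset.range (n + 1), Nat.card (Nat.Partition a) * Nat.card (Nat.Partition (n - a))

/-- The number of pairs `(λ, μ)` of `ℓ`-regular partitions (no part repeated `ℓ` or more times)
with `|λ| + |μ| = m`. -/
noncomputable def numRegularBipart (ℓ m : ℕ) : ℕ :=
  ∑ a ∈ Finset.range (m + 1),
    Nat.card {p : Nat.Partition a // ∀ i : ℕ, p.parts.count i < ℓ} *
      Nat.card {p : Nat.Partition (m - a) // ∀ i : ℕ, p.parts.count i < ℓ}

open scoped Classical in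
/-- For `n` positive and `ℓ` prime, the number of bipartitions of `n` equals the sum, over
partitions `ν` of `n` all of whose parts are powers of `ℓ`, of the product over the distinct
parts `i` of `ν` of the number of `ℓ`-regular bipartitions of the multiplicity of `i` in `ν`. -/
theorem stmt10 (n ℓ : ℕ) (hn : 0 < n) (hℓ : ℓ.Prime) :
    numBipart n =
      ∑ ν ∈ Finset.univ.filter
          (fun ν : Nat.Partition n => ∀ i ∈ ν.parts, ∃ a : ℕ, i = ℓ ^ a),
        ∏ i ∈ ν.parts.toFinset, numRegularBipart ℓ (ν.parts.count i) := by
  classical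
  have hℓ2 : 2 ≤ ℓ := hℓ.two_le
  obtain ⟨e⟩ := Stmt10Aux.main_equiv hℓ2 n
  have h1 : numBipart n = Nat.card (Stmt10Aux.TnT ℓ n) := by
    rw [numBipart, Stmt10Aux.card_FB n]
    exact Nat.card_congr e
  rw [h1, Stmt10Aux.card_T_eq hℓ2 n]
  apply Finset.sum_congr
  · apply Finset.filter_congr_decidable
  · intro ν _
    apply Finset.prod_congr rfl
    intro i _
    rw [numRegularBipart, Stmt10Aux.card_RB]
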